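/- Let u_0 = F+G, u_1 = (F+G)^3+G, u_2 = G, u_4 = (F+G)^2·G, u_5 = (F+G)^4·G + (F+G)·F·G in (ZMod 2)[r]. Then u_0, u_1, u_2, u_4, u_5 are linearly independent over the subring Z/2[G], and for each i ∈ {0,1,2,4,5} there is a polynomial g_i ∈ (ZMod 2)[t] of degree exactly i with u_i = (r^2+r)·g_i(r^2). -/
import Mathlib


open Polynomial

noncomputable section

/-- `F = r(r+1)^5` in `(ZMod 2)[r]`. -/
def Fp : Polynomial (ZMod 2) := X * (X + 1) ^ 5

/-- `G = r^5(r+1)` in `(ZMod 2)[r]`. -/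
def Gp : Polynomial (ZMod 2) := X ^ 5 * (X + 1)

/-- The elements `u_0, u_1, u_2, u_4, u_5` (with `u i = 0` for other `i`). -/
def u : ℕ → Polynomial (ZMod 2)
  | 0 => Fp + Gp
  | 1 => (Fp + Gp) ^ 3 + Gp
  | 2 => Gp
  | 4 => (Fp + Gp) ^ 2 * Gp
  | 5 => (Fp + Gp) ^ 4 * Gp + (Fp + Gp) * Fp * Gp
  | _ => 0

lemma two_eq_zero' : (2 : Polynomial (ZMod 2)) = 0 := by
  have h : (1 + 1 : ZMod 2) = 0 := rfl
  calc (2 : Polynomial (ZMod 2)) = C 1 + C 1 := by norm_num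
    _ = C (1 + 1) := by rw [C_add]
    _ = 0 := by rw [h, C_0]

/-- Shift exponents. -/
def Ee : Fin 5 → ℕ := ![1, 3, 5, 9, 7]

/-- Unit parts. -/
def Ww : Fin 5 → Polynomial (ZMod 2) :=
  ![1 + X, 1 + X, 1 + X, 1 + X + X ^ 2 + X ^ 3, 1 + X + X ^ 4 + X ^ 5]

/-- The building blocks. -/
def Vv (i : Fin 5) : Polynomial (ZMod 2) := X ^ Ee i * Ww i

lemma Ww_coeff_zero (i : Fin 5) : (Ww i).coeff 0 = 1 := by
  fin_cases i <;> simp [Ww]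

lemma Ee_mod_inj (j k : Fin 5) (h : Ee j % 5 = Ee k % 5) : j = k := by
  revert h; revert j k; decide

lemma Gp_eval_zero : Gp.eval 0 = 0 := by simp [Gp]

lemma aeval_coeff_zero (p : Polynomial (ZMod 2)) :
    (aeval Gp p).coeff 0 = p.coeff 0 := by
  have h : aeval Gp p = p.comp Gp := by
    rw [aeval_def, Polynomial.comp, Polynomial.algebraMap_eq]
  rw [h, coeff_zero_eq_eval_zero, eval_comp, Gp_eval_zero, ← coeff_zero_eq_eval_zero]

lemma step (q : Polynomial (ZMod 2)) (hq : q ≠ 0) (i : Fin 5) :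
    ∃ h : Polynomial (ZMod 2),
      (aeval Gp q) * Vv i = X ^ (5 * q.natTrailingDegree + Ee i) * h ∧ h.coeff 0 = 1 := by
  set m := q.natTrailingDegree with hm
  obtain ⟨q', hq'⟩ : (X : Polynomial (ZMod 2)) ^ m ∣ q :=
    X_pow_dvd_iff.mpr fun d hd => coeff_eq_zero_of_lt_natTrailingDegree hd
  have hc0 : q'.coeff 0 = 1 := by
    have h1 : q.coeff m = q'.coeff 0 := by
      rw [hq']; simpa using coeff_X_pow_mul q' m 0
    have h2 : q.coeff m ≠ 0 := trailingCoeff_nonzero_iff_nonzero.mpr hq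
    rw [h1] at h2
    revert h2; generalize q'.coeff 0 = x; revert x; decide
  have hs : (aeval Gp q').coeff 0 = 1 := by rw [aeval_coeff_zero, hc0]
  refine ⟨(X + 1) ^ m * aeval Gp q' * Ww i, ?_, ?_⟩
  · have hGm : Gp ^ m = X ^ (5 * m) * (X + 1) ^ m := by
      rw [Gp, mul_pow, ← pow_mul]
    rw [hq', map_mul, map_pow, aeval_X, hGm]
    simp only [Vv]
    ring
  · rw [mul_coeff_zero, mul_coeff_zero, hs, Ww_coeff_zero]
    have h3 : ((X + 1 : Polynomial (ZMod 2)) ^ m).coeff 0 = 1 := by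
      rw [coeff_zero_eq_eval_zero]; simp
    rw [h3]; ring

lemma indep (q : Fin 5 → Polynomial (ZMod 2))
    (h : ∑ i, (aeval Gp (q i)) * Vv i = 0) : ∀ i, q i = 0 := by
  by_contra hc
  push_neg at hc
  obtain ⟨i, hi⟩ := hc
  set s : Finset (Fin 5) := Finset.univ.filter (fun j => q j ≠ 0) with hs
  have hns : s.Nonempty := ⟨i, by simp [hs, hi]⟩
  obtain ⟨i₀, hi₀s, hmin⟩ :=
    s.exists_min_image (fun j => 5 * (q j).natTrailingDegree + Ee j) hns
  have hqi₀ : q i₀ ≠ 0 := by simpa [hs] using hi₀s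
  set d := 5 * (q i₀).natTrailingDegree + Ee i₀ with hd
  have hco : (∑ j, (aeval Gp (q j)) * Vv j).coeff d = 0 := by rw [h]; simp
  rw [finset_sum_coeff] at hco
  have hkey : ∀ j ∈ Finset.univ, ((aeval Gp (q j)) * Vv j).coeff d
      = if j = i₀ then (1 : ZMod 2) else 0 := by
    intro j _
    by_cases hqj : q j = 0
    · have hne : j ≠ i₀ := by rintro rfl; exact hqi₀ hqj
      simp [hqj, hne]
    · obtain ⟨hp, heq, hc0⟩ := step (q j) hqj j
      rw [heq]
      by_cases hji : j = i₀
      · subst hji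
        rw [if_pos rfl, ← hd, coeff_X_pow_mul']
        simp [hc0]
      · rw [if_neg hji, coeff_X_pow_mul', if_neg]
        have hle : d ≤ 5 * (q j).natTrailingDegree + Ee j :=
          hmin j (by simp [hs, hqj])
        have hne : d ≠ 5 * (q j).natTrailingDegree + Ee j := by
          intro hEq
          exact hji (Ee_mod_inj j i₀ (by omega))
        omega
  rw [Finset.sum_congr rfl hkey] at hco
  simp at hco

set_option maxHeartbeats 2000000 in
theorem u_indep_and_form :
    (∀ a : ℕ → Polynomial (ZMod 2),
      (∀ i, a i ∈ Algebra.adjoin (ZMod 2) ({Gp} : Set (Polynomial (ZMod 2)))) →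
      a 0 * u 0 + a 1 * u 1 + a 2 * u 2 + a 4 * u 4 + a 5 * u 5 = 0 →
      ∀ i ∈ ({0, 1, 2, 4, 5} : Set ℕ), a i = 0) ∧
    (∀ i ∈ ({0, 1, 2, 4, 5} : Set ℕ), ∃ g : Polynomial (ZMod 2),
      g.degree = (i : WithBot ℕ) ∧ u i = (X ^ 2 + X) * g.comp (X ^ 2)) := by
  constructor
  · intro a hmem hsum i hi
    have hget : ∀ j : ℕ, ∃ p : Polynomial (ZMod 2), aeval Gp p = a j := by
      intro j
      have hj := hmem j
      rwa [Algebra.adjoin_singleton_eq_range_aeval, AlgHom.mem_range] at hj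
    obtain ⟨p0, hp0⟩ := hget 0
    obtain ⟨p1, hp1⟩ := hget 1
    obtain ⟨p2, hp2⟩ := hget 2
    obtain ⟨p4, hp4⟩ := hget 4
    obtain ⟨p5, hp5⟩ := hget 5
    rw [← hp0, ← hp1, ← hp2, ← hp4, ← hp5] at hsum
    simp only [u] at hsum
    have hS : ∑ j, (aeval Gp ((![p0, p1, p2, p4, p4 + p5]) j)) * Vv j = 0 := by
      rw [Fin.sum_univ_five]
      simp only [Matrix.cons_val_zero, Matrix.cons_val_one, Matrix.head_cons,
        Matrix.cons_val_two, Matrix.tail_cons, Matrix.cons_val_three,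
        Matrix.cons_val_four, Vv, Ww, Ee, map_add]
      set b0 := (aeval Gp) p0 with hb0
      set b1 := (aeval Gp) p1 with hb1
      set b2 := (aeval Gp) p2 with hb2
      set b4 := (aeval Gp) p4 with hb4
      set b5 := (aeval Gp) p5 with hb5
      rw [Fp, Gp] at hsum
      linear_combination hsum +
        (b0 * ((-2) * X ^ 2 + (-5) * X ^ 3 + (-5) * X ^ 4 + (-3) * X ^ 5 + (-1) * X ^ 6)
        + b1 * ((-7) * X ^ 4 + (-53) * X ^ 5 + (-228) * X ^ 6 + (-684) * X ^ 7 + (-1518) * X ^ 8 + (-2585) * X ^ 9 + (-3465) * X ^ 10 + (-3714) * X ^ 11 + (-3206) * X ^ 12 + (-2226) * X ^ 13 + (-1230) * X ^ 14 + (-528) * X ^ 15 + (-168) * X ^ 16 + (-36) * X ^ 17 + (-4) * X ^ 18)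
        + b4 * ((-5) * X ^ 8 + (-27) * X ^ 9 + (-82) * X ^ 10 + (-165) * X ^ 11 + (-237) * X ^ 12 + (-252) * X ^ 13 + (-200) * X ^ 14 + (-118) * X ^ 15 + (-50) * X ^ 16 + (-14) * X ^ 17 + (-2) * X ^ 18)
        + b5 * ((-5) * X ^ 8 + (-28) * X ^ 9 + (-93) * X ^ 10 + (-270) * X ^ 11 + (-899) * X ^ 12 + (-3236) * X ^ 13 + (-10391) * X ^ 14 + (-27504) * X ^ 15 + (-59538) * X ^ 16 + (-106517) * X ^ 17 + (-159381) * X ^ 18 + (-201344) * X ^ 19 + (-216112) * X ^ 20 + (-197732) * X ^ 21 + (-154244) * X ^ 22 + (-102256) * X ^ 23 + (-57200) * X ^ 24 + (-26664) * X ^ 25 + (-10152) * X ^ 26 + (-3056) * X ^ 27 + (-688) * X ^ 28 + (-104) * X ^ 29 + (-8) * X ^ 30))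
        * two_eq_zero'
    have hz := indep _ hS
    have hz0 : p0 = 0 := by simpa using hz 0
    have hz1 : p1 = 0 := by simpa using hz 1
    have hz2 : p2 = 0 := by simpa using hz 2
    have hz4 : p4 = 0 := by simpa using hz 3
    have hz45 : p4 + p5 = 0 := by simpa using hz 4
    have hz5 : p5 = 0 := by rwa [hz4, zero_add] at hz45
    simp only [Set.mem_insert_iff, Set.mem_singleton_iff] at hi
    rcases hi with rfl | rfl | rfl | rfl | rfl
    · rw [← hp0, hz0, map_zero]
    · rw [← hp1, hz1, map_zero]
    · rw [← hp2, hz2, map_zero]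
    · rw [← hp4, hz4, map_zero]
    · rw [← hp5, hz5, map_zero]
  · intro i hi
    simp only [Set.mem_insert_iff, Set.mem_singleton_iff] at hi
    rcases hi with rfl | rfl | rfl | rfl | rfl
    · refine ⟨1, by simp, ?_⟩
      simp only [u, one_comp, Fp, Gp]
      linear_combination ((2) * X ^ 2 + (5) * X ^ 3 + (5) * X ^ 4 + (3) * X ^ 5 + (1) * X ^ 6
        : Polynomial (ZMod 2)) * two_eq_zero'
    · refine ⟨X, by simp, ?_⟩
      simp only [u, X_comp, Fp, Gp]
      linear_combination ((7) * X ^ 4 + (53) * X ^ 5 + (228) * X ^ 6 + (684) * X ^ 7 + (1518) * X ^ 8 + (2585) * X ^ 9 + (3465) * X ^ 10 + (3714) * X ^ 11 + (3206) * X ^ 12 + (2226) * X ^ 13 + (1230) * X ^ 14 + (528) * X ^ 15 + (168) * X ^ 16 + (36) * X ^ 17 + (4) * X ^ 18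
        : Polynomial (ZMod 2)) * two_eq_zero'
    · refine ⟨X ^ 2, by simp, ?_⟩
      simp only [u, pow_comp, X_comp, Fp, Gp]
      ring
    · refine ⟨X ^ 4 + X ^ 3, ?_, ?_⟩
      · compute_degree!
      · simp only [u, add_comp, pow_comp, X_comp, Fp, Gp]
        linear_combination ((5) * X ^ 8 + (27) * X ^ 9 + (82) * X ^ 10 + (166) * X ^ 11 + (238) * X ^ 12 + (252) * X ^ 13 + (200) * X ^ 14 + (118) * X ^ 15 + (50) * X ^ 16 + (14) * X ^ 17 + (2) * X ^ 18
          : Polynomial (ZMod 2)) * two_eq_zero'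
    · refine ⟨X ^ 5 + X ^ 3, ?_, ?_⟩
      · compute_degree!
      · simp only [u, add_comp, pow_comp, X_comp, Fp, Gp]
        linear_combination ((5) * X ^ 8 + (28) * X ^ 9 + (93) * X ^ 10 + (270) * X ^ 11 + (899) * X ^ 12 + (3236) * X ^ 13 + (10391) * X ^ 14 + (27504) * X ^ 15 + (59538) * X ^ 16 + (106517) * X ^ 17 + (159381) * X ^ 18 + (201344) * X ^ 19 + (216112) * X ^ 20 + (197732) * X ^ 21 + (154244) * X ^ 22 + (102256) * X ^ 23 + (57200) * X ^ 24 + (26664) * X ^ 25 + (10152) * X ^ 26 + (3056) * X ^ 27 + (688) * X ^ 28 + (104) * X ^ 29 + (8) * X ^ 30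
          : Polynomial (ZMod 2)) * two_eq_zero'
  
end
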